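/- Let n ≥ 3 and Γ̃ = {z ∈ ℂ^{n+1} : Re z_1 > 0 and Re z_{n+1} = (Re z_1)(Re z_2) + (Re z_1) Σ_{j=3}^n (Re z_j)²}. For every u ∈ ℝ, the holomorphic map Φ_u(z) = (z_1, z_2 + iu(z_1 − 1), z_3, …, z_n, z_{n+1} + (iu/2)(z_1² − 1)) maps Γ̃ bijectively onto Γ̃ and fixes the point p₀ = (1, 0, …, 0). -/

import Mathlib

/-- The tube hypersurface `Γ̃ = {z ∈ ℂ^{n+1} : Re z₁ > 0,
Re z_{n+1} = (Re z₁)(Re z₂) + (Re z₁) Σ_{j=3}^n (Re z_j)²}` (0-indexed coordinates). -/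
def tubeGamma (n : ℕ) (hn : 3 ≤ n) : Set (Fin (n + 1) → ℂ) :=
  {z | 0 < (z 0).re ∧ (z (Fin.last n)).re = (z 0).re * (z ⟨1, by omega⟩).re +
    (z 0).re * ∑ j : Fin (n + 1), (if 2 ≤ (j : ℕ) ∧ (j : ℕ) < n then (z j).re ^ 2 else 0)}

/-- The holomorphic map `Φ_u(z) = (z₁, z₂ + iu(z₁ − 1), z₃, …, z_n,
z_{n+1} + (iu/2)(z₁² − 1))`. -/
noncomputable def PhiU (n : ℕ) (u : ℝ) (z : Fin (n + 1) → ℂ) : Fin (n + 1) → ℂ := fun i =>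
  if (i : ℕ) = 1 then z i + Complex.I * (u : ℂ) * (z 0 - 1)
  else if (i : ℕ) = n then z i + (Complex.I * (u : ℂ) / 2) * ((z 0) ^ 2 - 1)
  else z i

lemma PhiU_zero (n : ℕ) (hn : 3 ≤ n) (u : ℝ) (z : Fin (n + 1) → ℂ) :
    PhiU n u z 0 = z 0 := by
  have h0 : ((0 : Fin (n + 1)) : ℕ) = 0 := rfl
  simp only [PhiU, h0]
  rw [if_neg (by omega), if_neg (by omega)]

lemma PhiU_one (n : ℕ) (hn : 3 ≤ n) (u : ℝ) (z : Fin (n + 1) → ℂ) :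
    PhiU n u z ⟨1, by omega⟩ = z ⟨1, by omega⟩ + Complex.I * (u : ℂ) * (z 0 - 1) := by
  simp [PhiU]

lemma PhiU_last (n : ℕ) (hn : 3 ≤ n) (u : ℝ) (z : Fin (n + 1) → ℂ) :
    PhiU n u z (Fin.last n) = z (Fin.last n)
      + (Complex.I * (u : ℂ) / 2) * ((z 0) ^ 2 - 1) := by
  simp only [PhiU, Fin.val_last]
  rw [if_neg (by omega)]
  simp

lemma PhiU_mid (n : ℕ) (hn : 3 ≤ n) (u : ℝ) (z : Fin (n + 1) → ℂ)
    (j : Fin (n + 1)) (h : 2 ≤ (j : ℕ) ∧ (j : ℕ) < n) :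
    PhiU n u z j = z j := by
  simp only [PhiU]
  rw [if_neg (by omega), if_neg (by omega)]

lemma PhiU_mapsTo (n : ℕ) (hn : 3 ≤ n) (u : ℝ) :
    Set.MapsTo (PhiU n u) (tubeGamma n hn) (tubeGamma n hn) := by
  intro z hz
  obtain ⟨h1, h2⟩ := hz
  constructor
  · rwa [PhiU_zero n hn]
  · rw [PhiU_zero n hn, PhiU_one n hn, PhiU_last n hn]
    have hsum : ∑ j : Fin (n + 1),
        (if 2 ≤ (j : ℕ) ∧ (j : ℕ) < n then (PhiU n u z j).re ^ 2 else 0) =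
        ∑ j : Fin (n + 1), (if 2 ≤ (j : ℕ) ∧ (j : ℕ) < n then (z j).re ^ 2 else 0) := by
      refine Finset.sum_congr rfl fun j _ => ?_
      by_cases h : 2 ≤ (j : ℕ) ∧ (j : ℕ) < n
      · rw [if_pos h, if_pos h, PhiU_mid n hn u z j h]
      · rw [if_neg h, if_neg h]
    rw [hsum]
    have e1 : (z (Fin.last n) + (Complex.I * (u : ℂ) / 2) * ((z 0) ^ 2 - 1)).re
        = (z (Fin.last n)).re - u * ((z 0).re * (z 0).im) := by
      simp [Complex.add_re, Complex.mul_re, Complex.div_re, Complex.sub_re, Complex.sub_im,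
        Complex.mul_im, pow_two]
      ring
    have e2 : (z ⟨1, by omega⟩ + Complex.I * (u : ℂ) * (z 0 - 1)).re
        = (z ⟨1, by omega⟩).re - u * (z 0).im := by
      simp [Complex.add_re, Complex.mul_re, Complex.sub_im]
      ring
    rw [e1, e2, h2]
    ring

lemma PhiU_comp (n : ℕ) (hn : 3 ≤ n) (u : ℝ) (z : Fin (n + 1) → ℂ) :
    PhiU n (-u) (PhiU n u z) = z := by
  funext i
  simp only [PhiU, Fin.val_zero]
  simp only [show ¬(0:ℕ) = 1 by omega, show ¬(0:ℕ) = n by omega, if_false]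
  by_cases h1 : (i : ℕ) = 1
  · rw [if_pos h1, if_pos h1]
    push_cast
    ring
  · rw [if_neg h1, if_neg h1]
    by_cases h2 : (i : ℕ) = n
    · rw [if_pos h2, if_pos h2]
      push_cast
      ring
    · rw [if_neg h2, if_neg h2]

/-- For every `u ∈ ℝ`, `Φ_u` maps `Γ̃` bijectively onto `Γ̃` and fixes `p₀ = (1, 0, …, 0)`. -/
theorem PhiU_bijOn_tubeGamma (n : ℕ) (hn : 3 ≤ n) (u : ℝ) :
    Set.BijOn (PhiU n u) (tubeGamma n hn) (tubeGamma n hn) ∧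
    PhiU n u (fun i => if (i : ℕ) = 0 then 1 else 0) =
      (fun i : Fin (n + 1) => if (i : ℕ) = 0 then (1 : ℂ) else 0) := by
  constructor
  · refine Set.InvOn.bijOn ⟨?_, ?_⟩ (PhiU_mapsTo n hn u) (PhiU_mapsTo n hn (-u))
    · intro z _; exact PhiU_comp n hn u z
    · intro z _
      have := PhiU_comp n hn (-u) z
      rwa [neg_neg] at this
  · funext i
    have hn0 : ¬ n = 0 := by omega
    by_cases h1 : (i : ℕ) = 1
    · simp [PhiU, h1]
    · by_cases h2 : (i : ℕ) = n
      · simp [PhiU, h1, h2, hn0]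
      · simp [PhiU, h1, h2]
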